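/- Let A_* be irreducible with all iterates finite, and let γ* = inf_{z>0} cp(A_*(z))^{−1} with A_*(z) = z^{−1}A_{-1}+A_0+zA_1. If there exists z* > 0 and a positive vector u with uᵀ A_*(z*) ≤ γ* uᵀ and γ* ≤ 1, then the iterates X_n of the iteration X_0 = O, X_n = X_{n−1}² A_{-1} + X_{n−1} A_0 + A_1 satisfy uᵀ X_n ≤ (z*)^{−1} uᵀ for all n, and hence the minimal nonnegative solution R to X = X² A_{-1} + X A_0 + A_1 exists. -/
import Mathlib


open scoped ENNReal
open Classical

abbrev Mx := ℕ → ℕ → ℝ≥0∞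

noncomputable def mprod (A B : Mx) : Mx := fun i j => ∑' k, A i k * B k j

noncomputable def matPow {ι : Type*} (A : ι → ι → ℝ≥0∞) : ℕ → ι → ι → ℝ≥0∞
  | 0 => fun i j => if i = j then 1 else 0
  | n + 1 => fun i j => ∑' k, A i k * matPow A n k j

def IsIrred {ι : Type*} (A : ι → ι → ℝ≥0∞) : Prop :=
  ∀ a b, ∃ n, 1 ≤ n ∧ 0 < matPow A n a b

/-- Convergence parameter: `cp(M) = sup{z ≥ 0 : Σ_k z^k M^k entrywise finite}`. -/
noncomputable def cp {ι : Type*} (A : ι → ι → ℝ≥0∞) : ℝ≥0∞ :=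
  sSup {z : ℝ≥0∞ | ∀ i j, (∑' n : ℕ, z ^ n * matPow A n i j) ≠ ⊤}

/-- `A_*(z) = z⁻¹ A₋₁ + A₀ + z A₁` for `z > 0`. -/
noncomputable def AsZ (Am1 A0 A1 : Mx) (z : ℝ) : Mx := fun i j =>
  (ENNReal.ofReal z)⁻¹ * Am1 i j + A0 i j + ENNReal.ofReal z * A1 i j

/-- The iteration `X₀ = O`, `X_n = X_{n-1}² A₋₁ + X_{n-1} A₀ + A₁`. -/
noncomputable def iterR (Am1 A0 A1 : Mx) : ℕ → Mx
  | 0 => fun _ _ => 0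
  | n + 1 => fun i j =>
      mprod (mprod (iterR Am1 A0 A1 n) (iterR Am1 A0 A1 n)) Am1 i j +
        mprod (iterR Am1 A0 A1 n) A0 i j + A1 i j

/-- `X` is the minimal nonnegative (entrywise finite) solution of
`X = X² A₋₁ + X A₀ + A₁`. -/
def IsMinSolR (Am1 A0 A1 X : Mx) : Prop :=
  (∀ i j, X i j ≠ ⊤) ∧
  (∀ i j, X i j = mprod (mprod X X) Am1 i j + mprod X A0 i j + A1 i j) ∧
  (∀ Y : Mx, (∀ i j, Y i j ≠ ⊤) →
    (∀ i j, Y i j = mprod (mprod Y Y) Am1 i j + mprod Y A0 i j + A1 i j) →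
    ∀ i j, X i j ≤ Y i j)

/-- If `A_*` is irreducible with finite iterates, `γ* = inf_{z>0} cp(A_*(z))⁻¹ ≤ 1`
and there is `z* > 0` and a positive vector `u` with `uᵀ A_*(z*) ≤ γ* uᵀ`, then
`uᵀ X_n ≤ (z*)⁻¹ uᵀ` for all `n`, and the minimal nonnegative solution `R` of
`X = X² A₋₁ + X A₀ + A₁` exists. -/

lemma tsum_iSup_mono {f : ℕ → ℕ → ℝ≥0∞} (hf : ∀ k, Monotone fun n => f n k) :
    ∑' k, ⨆ n, f n k = ⨆ n, ∑' k, f n k := by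
  rw [ENNReal.tsum_eq_iSup_sum]
  have h1 : ∀ s : Finset ℕ, ∑ k ∈ s, ⨆ n, f n k = ⨆ n, ∑ k ∈ s, f n k := fun s =>
    ENNReal.finsetSum_iSup_of_monotone fun k => hf k
  simp_rw [h1]
  rw [iSup_comm]
  exact iSup_congr fun n => (ENNReal.tsum_eq_iSup_sum).symm

lemma iSup_mul_iSup_mono {a b : ℕ → ℝ≥0∞} (ha : Monotone a) (hb : Monotone b) :
    (⨆ n, a n) * (⨆ n, b n) = ⨆ n, a n * b n := by
  rw [ENNReal.iSup_mul]
  simp_rw [ENNReal.mul_iSup]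
  apply le_antisymm
  · refine iSup_le fun n => iSup_le fun m => ?_
    exact le_iSup_of_le (max n m)
      (mul_le_mul' (ha (le_max_left n m)) (hb (le_max_right n m)))
  · exact iSup_le fun n => le_iSup_of_le n (le_iSup_of_le n le_rfl)

lemma vec_mprod (u : ℕ → ℝ≥0∞) (M N : Mx) (j : ℕ) :
    ∑' i, u i * mprod M N i j = ∑' k, (∑' i, u i * M i k) * N k j := by
  simp only [mprod]
  simp_rw [← ENNReal.tsum_mul_left]
  rw [ENNReal.tsum_comm]
  simp_rw [← mul_assoc, ENNReal.tsum_mul_right]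

lemma mprod_mono {A A' B B' : Mx} (hA : ∀ i j, A i j ≤ A' i j)
    (hB : ∀ i j, B i j ≤ B' i j) (i j : ℕ) : mprod A B i j ≤ mprod A' B' i j :=
  ENNReal.tsum_le_tsum fun k => mul_le_mul' (hA i k) (hB k j)

lemma iterR_le_succ (Am1 A0 A1 : Mx) :
    ∀ n i j, iterR Am1 A0 A1 n i j ≤ iterR Am1 A0 A1 (n + 1) i j := by
  intro n
  induction n with
  | zero => intro i j; simp [iterR]
  | succ n ih =>
    intro i j
    exact add_le_add (add_le_add (mprod_mono (mprod_mono ih ih) (fun _ _ => le_rfl) i j)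
      (mprod_mono ih (fun _ _ => le_rfl) i j)) le_rfl

lemma iterR_mono (Am1 A0 A1 : Mx) (i j : ℕ) :
    Monotone fun n => iterR Am1 A0 A1 n i j :=
  monotone_nat_of_le_succ fun n => iterR_le_succ Am1 A0 A1 n i j

lemma mprod_iSup_left {F : ℕ → Mx} (C : Mx)
    (hF : ∀ i j, Monotone fun n => F n i j) (i j : ℕ) :
    mprod (fun a b => ⨆ n, F n a b) C i j = ⨆ n, mprod (F n) C i j := by
  simp only [mprod, ENNReal.iSup_mul]
  exact tsum_iSup_mono fun k _ _ h => mul_le_mul' (hF i k h) le_rfl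

lemma mprod_iSup_both {F : ℕ → Mx}
    (hF : ∀ i j, Monotone fun n => F n i j) (i j : ℕ) :
    mprod (fun a b => ⨆ n, F n a b) (fun a b => ⨆ n, F n a b) i j
      = ⨆ n, mprod (F n) (F n) i j := by
  simp only [mprod]
  rw [tsum_congr fun k => iSup_mul_iSup_mono (hF i k) (hF k j)]
  exact tsum_iSup_mono fun k _ _ h => mul_le_mul' (hF i k h) (hF k j h)

theorem stmt13 (Am1 A0 A1 : Mx)
    (hirr : IsIrred (fun i j => Am1 i j + A0 i j + A1 i j))
    (hfin : ∀ n i j, matPow (fun i j => Am1 i j + A0 i j + A1 i j) n i j ≠ ⊤)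
    (γ : ℝ≥0∞)
    (hγdef : γ = ⨅ z ∈ Set.Ioi (0 : ℝ), (cp (AsZ Am1 A0 A1 z))⁻¹)
    (hγ : γ ≤ 1)
    (zs : ℝ) (hzs : 0 < zs)
    (u : ℕ → ℝ≥0∞) (hu : ∀ i, 0 < u i ∧ u i ≠ ⊤)
    (huA : ∀ j, (∑' i, u i * AsZ Am1 A0 A1 zs i j) ≤ γ * u j) :
    (∀ n j, (∑' i, u i * iterR Am1 A0 A1 n i j) ≤ (ENNReal.ofReal zs)⁻¹ * u j) ∧
    ∃ R, IsMinSolR Am1 A0 A1 R := by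
  set z : ℝ≥0∞ := ENNReal.ofReal zs with hz
  have hz0 : z ≠ 0 := by simp [hz, ENNReal.ofReal_pos.mpr hzs, ne_of_gt]
  have hzt : z ≠ ⊤ := ENNReal.ofReal_ne_top
  have hz1 : z⁻¹ * z = 1 := ENNReal.inv_mul_cancel hz0 hzt
  set X := iterR Am1 A0 A1 with hX
  -- the key bound, by induction
  have key : ∀ n j, (∑' i, u i * X n i j) ≤ z⁻¹ * u j := by
    intro n
    induction n with
    | zero => intro j; simp [hX, iterR]
    | succ n ih =>
      intro j
      have hsplit : (∑' i, u i * X (n + 1) i j)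
          = (∑' i, u i * mprod (mprod (X n) (X n)) Am1 i j)
            + ((∑' i, u i * mprod (X n) A0 i j) + (∑' i, u i * A1 i j)) := by
        rw [← ENNReal.tsum_add, ← ENNReal.tsum_add]
        refine tsum_congr fun i => ?_
        show u i * iterR Am1 A0 A1 (n + 1) i j = _
        simp only [iterR, mul_add, ← hX]
        ring
      rw [hsplit]
      have hXn : ∀ k, (∑' i, u i * mprod (X n) (X n) i k) ≤ z⁻¹ * (z⁻¹ * u k) := by
        intro k
        rw [vec_mprod]
        calc (∑' l, (∑' i, u i * X n i l) * X n l k)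
            ≤ ∑' l, (z⁻¹ * u l) * X n l k :=
              ENNReal.tsum_le_tsum fun l => mul_le_mul' (ih l) le_rfl
          _ = z⁻¹ * ∑' l, u l * X n l k := by
              simp_rw [mul_assoc]; exact ENNReal.tsum_mul_left
          _ ≤ z⁻¹ * (z⁻¹ * u k) := mul_le_mul' le_rfl (ih k)
      have h1 : (∑' i, u i * mprod (mprod (X n) (X n)) Am1 i j)
          ≤ ∑' k, (z⁻¹ * (z⁻¹ * u k)) * Am1 k j := by
        rw [vec_mprod]
        exact ENNReal.tsum_le_tsum fun k => mul_le_mul' (hXn k) le_rfl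
      have h2 : (∑' i, u i * mprod (X n) A0 i j) ≤ ∑' k, (z⁻¹ * u k) * A0 k j := by
        rw [vec_mprod]
        exact ENNReal.tsum_le_tsum fun k => mul_le_mul' (ih k) le_rfl
      have hcomb : (∑' k, (z⁻¹ * (z⁻¹ * u k)) * Am1 k j)
          + ((∑' k, (z⁻¹ * u k) * A0 k j) + (∑' k, u k * A1 k j))
          = z⁻¹ * ∑' k, u k * AsZ Am1 A0 A1 zs k j := by
        rw [← ENNReal.tsum_mul_left, ← ENNReal.tsum_add, ← ENNReal.tsum_add]
        refine tsum_congr fun k => ?_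
        simp only [AsZ, ← hz]
        rw [mul_add, mul_add, mul_add, mul_add]
        have : z⁻¹ * (u k * (z * A1 k j)) = u k * A1 k j := by
          rw [show z⁻¹ * (u k * (z * A1 k j)) = (z⁻¹ * z) * (u k * A1 k j) by ring,
            hz1, one_mul]
        rw [this]
        ring_nf
      calc (∑' i, u i * mprod (mprod (X n) (X n)) Am1 i j)
          + ((∑' i, u i * mprod (X n) A0 i j) + (∑' i, u i * A1 i j))
          ≤ (∑' k, (z⁻¹ * (z⁻¹ * u k)) * Am1 k j)
            + ((∑' k, (z⁻¹ * u k) * A0 k j) + (∑' k, u k * A1 k j)) :=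
            add_le_add h1 (add_le_add h2 le_rfl)
        _ = z⁻¹ * ∑' k, u k * AsZ Am1 A0 A1 zs k j := hcomb
        _ ≤ z⁻¹ * (γ * u j) := mul_le_mul' le_rfl (huA j)
        _ ≤ z⁻¹ * (1 * u j) := mul_le_mul' le_rfl (mul_le_mul' hγ le_rfl)
        _ = z⁻¹ * u j := by rw [one_mul]
  refine ⟨key, ?_⟩
  -- existence of the minimal solution
  set R : Mx := fun i j => ⨆ n, X n i j with hR
  have hmono : ∀ i j, Monotone fun n => X n i j := iterR_mono Am1 A0 A1
  have hmono2 : ∀ i j, Monotone fun n => mprod (X n) (X n) i j := fun i j _ _ h =>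
    mprod_mono (fun a b => hmono a b h) (fun a b => hmono a b h) i j
  have hRR : ∀ i j, mprod R R i j = ⨆ n, mprod (X n) (X n) i j := fun i j =>
    mprod_iSup_both hmono i j
  have hRRf : mprod R R = fun a b => ⨆ n, mprod (X n) (X n) a b :=
    funext fun a => funext fun b => hRR a b
  have hfinR : ∀ i j, R i j ≠ ⊤ := by
    intro i j hcon
    have hub : ∀ n, u i * X n i j ≤ z⁻¹ * u j := fun n =>
      le_trans (ENNReal.le_tsum i) (key n j)
    have : u i * R i j ≤ z⁻¹ * u j := by
      rw [hR]
      simp only [ENNReal.mul_iSup]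
      exact iSup_le hub
    rw [hcon, ENNReal.mul_top (hu i).1.ne'] at this
    have : (⊤ : ℝ≥0∞) ≠ ⊤ := by
      refine ne_top_of_le_ne_top ?_ this
      exact ENNReal.mul_ne_top (ENNReal.inv_ne_top.mpr hz0) (hu j).2
    exact this rfl
  have heq : ∀ i j, R i j = mprod (mprod R R) Am1 i j + mprod R A0 i j + A1 i j := by
    intro i j
    have hshift : R i j = ⨆ n, X (n + 1) i j := by
      rw [hR]
      exact ((hmono i j).iSup_nat_add 1).symm
    rw [hshift]
    have hexp : ∀ n, X (n + 1) i j
        = mprod (mprod (X n) (X n)) Am1 i j + mprod (X n) A0 i j + A1 i j := by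
      intro n; rfl
    rw [iSup_congr hexp]
    have hP : Monotone fun n => mprod (mprod (X n) (X n)) Am1 i j := fun _ _ h =>
      mprod_mono (fun a b => hmono2 a b h) (fun _ _ => le_rfl) i j
    have hQ : Monotone fun n => mprod (X n) A0 i j := fun _ _ h =>
      mprod_mono (fun a b => hmono a b h) (fun _ _ => le_rfl) i j
    rw [← ENNReal.iSup_add_iSup_of_monotone (f := fun n =>
        mprod (mprod (X n) (X n)) Am1 i j + mprod (X n) A0 i j)
        (g := fun _ => A1 i j) (fun _ _ h => add_le_add (hP h) (hQ h)) monotone_const,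
      ← ENNReal.iSup_add_iSup_of_monotone hP hQ]
    congr 2
    · rw [hRRf, mprod_iSup_left Am1 hmono2 i j]
    · exact (mprod_iSup_left A0 hmono i j).symm
    · exact iSup_const
  refine ⟨R, hfinR, heq, ?_⟩
  intro Y hYfin hYeq i j
  have hXY : ∀ n i j, X n i j ≤ Y i j := by
    intro n
    induction n with
    | zero => intro i j; simp [hX, iterR]
    | succ n ih =>
      intro i j
      calc X (n + 1) i j
          = mprod (mprod (X n) (X n)) Am1 i j + mprod (X n) A0 i j + A1 i j := rfl
        _ ≤ mprod (mprod Y Y) Am1 i j + mprod Y A0 i j + A1 i j :=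
            add_le_add (add_le_add (mprod_mono
              (fun a b => mprod_mono ih ih a b) (fun _ _ => le_rfl) i j)
              (mprod_mono ih (fun _ _ => le_rfl) i j)) le_rfl
        _ = Y i j := (hYeq i j).symm
  exact iSup_le fun n => hXY n i j
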